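/- Let r : F̄X ⊗ FY ⟶ Ω be tame with witnesses (r_*, r^*) and let s : F̄Y ⊗ FZ ⟶ Ω be tame with witnesses (s_*, s^*). Then the composite s • r is tame with witnesses (s_* ∘ r_*, r^* ∘ s^*); explicitly, cpZ ∘ ((s_* ∘ r_*)‾ ⊗ id_{FZ}) = s • r and cpX ∘ (id_{F̄X} ⊗ (r^* ∘ s^*)) = s • r. -/

import Mathlib

open CategoryTheory MonoidalCategory

universe u v

/-- Composition of tame relations is tame, with witnesses `r_* ≫ s_*` and `s^* ≫ r^*`. -/
theorem tame_comp {C : Type u} [Category.{v} C] [MonoidalCategory C]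
    (B : C ⥤ C) (Ω FX FY FZ : C)
    (cpX : B.obj FX ⊗ FX ⟶ Ω) (cpY : B.obj FY ⊗ FY ⟶ Ω) (cpZ : B.obj FZ ⊗ FZ ⟶ Ω)
    (r : B.obj FX ⊗ FY ⟶ Ω) (rst : FX ⟶ FY) (rco : FY ⟶ FX)
    (hr1 : (B.map rst ⊗ₘ 𝟙 FY) ≫ cpY = r)
    (hr2 : (𝟙 (B.obj FX) ⊗ₘ rco) ≫ cpX = r)
    (s : B.obj FY ⊗ FZ ⟶ Ω) (sst : FY ⟶ FZ) (sco : FZ ⟶ FY)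
    (hs1 : (B.map sst ⊗ₘ 𝟙 FZ) ≫ cpZ = s)
    (hs2 : (𝟙 (B.obj FY) ⊗ₘ sco) ≫ cpY = s) :
    (B.map (rst ≫ sst) ⊗ₘ 𝟙 FZ) ≫ cpZ = (B.map rst ⊗ₘ 𝟙 FZ) ≫ s ∧
    (𝟙 (B.obj FX) ⊗ₘ (sco ≫ rco)) ≫ cpX = (B.map rst ⊗ₘ 𝟙 FZ) ≫ s := by
  constructor
  · rw [B.map_comp, ← hs1, ← Category.assoc, tensorHom_comp_tensorHom, Category.comp_id]
  · rw [id_tensor_comp, Category.assoc, hr2, ← hr1, ← Category.assoc,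
      id_tensor_comp_tensor_id, ← tensor_id_comp_id_tensor, Category.assoc, hs2]
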